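/- Let G be a finitely generated group and H ≤ G a subgroup such that every isometric action of H on a metric space extends to an isometric action of G (i.e., the extension problem for H ≤ G is solvable). Then H is finitely generated. -/

import Mathlib

open Function

namespace ExtensionAux

variable {Γ : Type} [Group Γ]

/-- Weighted word length with respect to the (possibly infinite) generating set `Γ` itself,
where a generator `s` has weight `v s`. -/
noncomputable def wlen (v : Γ → ℕ) (g : Γ) : ℕ :=
  sInf {k | ∃ l : List Γ, l.prod = g ∧ (l.map v).sum = k}

lemma wlen_mem (v : Γ → ℕ) (g : Γ) :
    ∃ l : List Γ, l.prod = g ∧ (l.map v).sum = wlen v g := by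
  have h : wlen v g ∈ {k | ∃ l : List Γ, l.prod = g ∧ (l.map v).sum = k} :=
    Nat.sInf_mem ⟨v g, [g], by simp, by simp⟩
  exact h

lemma wlen_le (v : Γ → ℕ) {g : Γ} (l : List Γ) (hl : l.prod = g) :
    wlen v g ≤ (l.map v).sum :=
  Nat.sInf_le ⟨l, hl, rfl⟩

lemma wlen_one (v : Γ → ℕ) : wlen v 1 = 0 :=
  Nat.le_zero.mp (by simpa using wlen_le v ([] : List Γ) (by simp))

lemma wlen_mul (v : Γ → ℕ) (a b : Γ) : wlen v (a * b) ≤ wlen v a + wlen v b := by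
  obtain ⟨la, hla, hsa⟩ := wlen_mem v a
  obtain ⟨lb, hlb, hsb⟩ := wlen_mem v b
  have h := wlen_le v (la ++ lb) (by rw [List.prod_append, hla, hlb])
  simpa [hsa, hsb] using h

lemma wlen_inv (v : Γ → ℕ) (hvinv : ∀ s : Γ, v s⁻¹ = v s) (g : Γ) :
    wlen v g⁻¹ = wlen v g := by
  have key : ∀ x : Γ, wlen v x⁻¹ ≤ wlen v x := by
    intro x
    obtain ⟨l, hl, hs⟩ := wlen_mem v x
    have h := wlen_le v ((l.map Inv.inv).reverse)
      (by rw [← List.prod_inv_reverse, hl])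
    have h2 : (((l.map Inv.inv).reverse).map v).sum = (l.map v).sum := by
      rw [List.map_reverse, List.sum_reverse, List.map_map]
      simp [Function.comp_def, hvinv]
    rw [h2, hs] at h
    exact h
  exact le_antisymm (key g) (by simpa using key g⁻¹)

lemma eq_one_of_wlen_eq_zero (v : Γ → ℕ) (hv1 : ∀ s : Γ, 1 ≤ v s) {g : Γ}
    (h : wlen v g = 0) : g = 1 := by
  obtain ⟨l, hl, hs⟩ := wlen_mem v g
  rw [h] at hs
  cases l with
  | nil => simpa using hl.symm
  | cons a t =>
      exfalso
      have h1 := hv1 a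
      simp [List.sum_cons] at hs
      omega

lemma le_wlen (v : Γ → ℕ) {g : Γ} (K : Subgroup Γ) (hg : g ∉ K) {c : ℕ}
    (hc : ∀ s : Γ, s ∉ K → c ≤ v s) : c ≤ wlen v g := by
  obtain ⟨l, hl, hs⟩ := wlen_mem v g
  by_cases hall : ∀ x ∈ l, x ∈ K
  · exact absurd (hl ▸ K.list_prod_mem hall) hg
  · push_neg at hall
    obtain ⟨x, hxl, hxK⟩ := hall
    calc c ≤ v x := hc x hxK
      _ ≤ (l.map v).sum :=
        List.single_le_sum (fun _ _ => Nat.zero_le _) _ (List.mem_map_of_mem (f := v) hxl)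
      _ = wlen v g := hs

/-- The left-invariant metric on `Γ` induced by a weighted word length. -/
noncomputable def wMetric (v : Γ → ℕ) (hv1 : ∀ s : Γ, 1 ≤ v s)
    (hvinv : ∀ s : Γ, v s⁻¹ = v s) : MetricSpace Γ where
  dist x y := (wlen v (x⁻¹ * y) : ℝ)
  dist_self x := by
    show (wlen v (x⁻¹ * x) : ℝ) = 0
    simp [wlen_one]
  dist_comm x y := by
    show (wlen v (x⁻¹ * y) : ℝ) = (wlen v (y⁻¹ * x) : ℝ)
    have h : (x⁻¹ * y)⁻¹ = y⁻¹ * x := by group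
    have h2 : wlen v (y⁻¹ * x) = wlen v (x⁻¹ * y) := by
      rw [← h, wlen_inv v hvinv]
    exact_mod_cast h2.symm
  dist_triangle x y z := by
    show (wlen v (x⁻¹ * z) : ℝ) ≤ (wlen v (x⁻¹ * y) : ℝ) + (wlen v (y⁻¹ * z) : ℝ)
    have h : x⁻¹ * z = (x⁻¹ * y) * (y⁻¹ * z) := by group
    rw [h]
    exact_mod_cast wlen_mul v (x⁻¹ * y) (y⁻¹ * z)
  eq_of_dist_eq_zero := by
    intro x y h
    have h' : ((wlen v (x⁻¹ * y) : ℕ) : ℝ) = 0 := h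
    have h0 : wlen v (x⁻¹ * y) = 0 := by exact_mod_cast h'
    exact inv_mul_eq_one.mp (eq_one_of_wlen_eq_zero v hv1 h0)

lemma fg_sup {A B : Subgroup Γ} (hA : A.FG) (hB : B.FG) : (A ⊔ B).FG := by
  classical
  obtain ⟨S, hS⟩ := hA
  obtain ⟨T, hT⟩ := hB
  exact ⟨S ∪ T, by rw [Finset.coe_union, Subgroup.closure_union, hS, hT]⟩

open Classical in
/-- A choice of an element outside a subgroup (or `1` if there is none). -/
noncomputable def pick (A : Subgroup Γ) : Γ :=
  if h : ∃ x, x ∉ A then h.choose else 1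

lemma pick_not_mem {A : Subgroup Γ} (h : A ≠ ⊤) : pick A ∉ A := by
  have hx : ∃ x, x ∉ A := by
    by_contra hc
    push_neg at hc
    exact h ((Subgroup.eq_top_iff' A).mpr hc)
  rw [pick, dif_pos hx]
  exact hx.choose_spec

/-- An increasing chain of finitely generated subgroups, each obtained from the previous one
by adjoining an element outside of it together with the next element of an enumeration. -/
noncomputable def chain (e : ℕ → Γ) : ℕ → Subgroup Γ
  | 0 => ⊥
  | n + 1 => chain e n ⊔ Subgroup.closure {pick (chain e n), e n}

lemma chain_fg (e : ℕ → Γ) (n : ℕ) : (chain e n).FG := by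
  classical
  induction n with
  | zero => exact ⟨∅, by simp [chain]⟩
  | succ n ih =>
      rw [chain]
      exact fg_sup ih ⟨{pick (chain e n), e n}, by simp⟩

lemma chain_mono (e : ℕ → Γ) : Monotone (chain e) :=
  monotone_nat_of_le_succ fun n => by rw [chain]; exact le_sup_left

lemma mem_chain (e : ℕ → Γ) (he : Surjective e) (x : Γ) : ∃ n, x ∈ chain e n := by
  obtain ⟨n, rfl⟩ := he x
  refine ⟨n + 1, ?_⟩
  rw [chain]
  exact SetLike.le_def.mp le_sup_right (Subgroup.subset_closure (by simp))

lemma pick_chain_not_mem (e : ℕ → Γ) (hΓ : ¬ Group.FG Γ) (n : ℕ) :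
    pick (chain e n) ∉ chain e n := by
  apply pick_not_mem
  intro htop
  exact hΓ (Group.fg_def.mpr (htop ▸ chain_fg e n))

open Classical in
/-- The weight of an element: the first stage of the chain containing it. -/
noncomputable def wt (e : ℕ → Γ) (he : Surjective e) (x : Γ) : ℕ :=
  Nat.find (mem_chain e he x)

open Classical in
lemma wt_spec (e : ℕ → Γ) (he : Surjective e) (x : Γ) : x ∈ chain e (wt e he x) :=
  Nat.find_spec (mem_chain e he x)

open Classical in
lemma wt_le (e : ℕ → Γ) (he : Surjective e) {x : Γ} {n : ℕ} (h : x ∈ chain e n) :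
    wt e he x ≤ n :=
  Nat.find_le h

lemma wt_inv (e : ℕ → Γ) (he : Surjective e) (x : Γ) : wt e he x⁻¹ = wt e he x := by
  have key : ∀ y : Γ, wt e he y⁻¹ ≤ wt e he y := fun y =>
    wt_le e he ((chain e (wt e he y)).inv_mem (wt_spec e he y))
  exact le_antisymm (key x) (by simpa using key x⁻¹)

lemma countable_of_fg (G : Type) [Group G] [Group.FG G] : Countable G := by
  obtain ⟨T, hT, hTfin⟩ := Group.fg_iff.mp ‹Group.FG G›
  have hrep : ∀ g : G, ∃ l : List ↥(T ∪ T⁻¹), (l.map Subtype.val).prod = g := by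
    intro g
    have hg' : g ∈ Submonoid.closure (T ∪ T⁻¹) := by
      rw [← Subgroup.closure_toSubmonoid, Subgroup.mem_toSubmonoid, hT]
      trivial
    obtain ⟨l, hlm, hlp⟩ := Submonoid.exists_list_of_mem_closure hg'
    refine ⟨l.pmap (fun x hx => (⟨x, hx⟩ : ↥(T ∪ T⁻¹))) hlm, ?_⟩
    rw [List.map_pmap]
    simpa [List.pmap_eq_map] using hlp
  haveI : Countable ↥(T ∪ T⁻¹) := ((hTfin.union hTfin.inv).countable).to_subtype
  exact Function.Surjective.countable
    (f := fun l : List ↥(T ∪ T⁻¹) => (l.map Subtype.val).prod) (fun g => hrep g)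

end ExtensionAux

open ExtensionAux Function

/-- If `G` is a finitely generated group and `H ≤ G` is a subgroup for which the extension
problem is solvable (every isometric action of `H` on a metric space admits an extension to
an isometric `G`-action), then `H` is finitely generated. -/
theorem fg_of_extension_problem_solvable {G : Type} [Group G] [Group.FG G] (H : Subgroup G)
    (hext : ∀ (R : Type) [MetricSpace R] (ρ : H → R → R),
      (∀ x, ρ 1 x = x) → (∀ h h' x, ρ (h * h') x = ρ h (ρ h' x)) →
      (∀ h x y, dist (ρ h x) (ρ h y) = dist x y) →
      ∃ (S : Type) (_ : MetricSpace S) (σ : G → S → S),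
        (∀ x, σ 1 x = x) ∧ (∀ g g' x, σ (g * g') x = σ g (σ g' x)) ∧
        (∀ g x y, dist (σ g x) (σ g y) = dist x y) ∧
        ∃ f : R → S,
          (∃ C : ℝ, 1 ≤ C ∧ ∀ x y : R,
            (1 / C) * dist x y - C ≤ dist (f x) (f y) ∧ dist (f x) (f y) ≤ C * dist x y + C) ∧
          (∀ x : R, ∃ D : ℝ, ∀ h : H, dist (f (ρ h x)) (σ (h : G) (f x)) ≤ D)) :
    H.FG := by
  by_contra hfg
  have hfg' : ¬ Group.FG ↥H := fun h => hfg ((Group.fg_iff_subgroup_fg H).mp h)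
  haveI : Countable G := countable_of_fg G
  obtain ⟨e, he⟩ := exists_surjective_nat ↥H
  -- generators of G and representing words
  obtain ⟨T, hT, hTfin⟩ := Group.fg_iff.mp ‹Group.FG G›
  have hrepex : ∀ g : G, ∃ l : List G, (∀ x ∈ l, x ∈ T ∪ T⁻¹) ∧ l.prod = g := by
    intro g
    have hg' : g ∈ Submonoid.closure (T ∪ T⁻¹) := by
      rw [← Subgroup.closure_toSubmonoid, Subgroup.mem_toSubmonoid, hT]
      trivial
    obtain ⟨l, hlm, hlp⟩ := Submonoid.exists_list_of_mem_closure hg'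
    exact ⟨l, hlm, hlp⟩
  choose rep hrepmem hrepprod using hrepex
  set glen : G → ℕ := fun g => (rep g).length with hglen
  -- the chain of f.g. subgroups of H and the weights
  have hhn : ∀ n, pick (chain e n) ∉ chain e n := pick_chain_not_mem e hfg'
  set w : ↥H → ℕ := wt e he with hw
  set A : ℕ → ℕ := fun m => (Finset.range m).sup fun j => glen ↑(pick (chain e j)) with hA
  set φ : ℕ → ℕ := fun m => m * (1 + A m) + 1 with hφ
  have hφmono : Monotone φ := by
    intro a b hab
    have hAm : A a ≤ A b := Finset.sup_mono (Finset.range_subset_range.mpr hab)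
    have := Nat.mul_le_mul hab (Nat.add_le_add_left hAm 1)
    simp only [hφ]
    omega
  set v : ↥H → ℕ := fun x => φ (w x) with hv
  have hv1 : ∀ s : ↥H, 1 ≤ v s := fun s => Nat.le_add_left 1 _
  have hvinv : ∀ s : ↥H, v s⁻¹ = v s := by
    intro s
    simp only [hv, hw]
    rw [wt_inv]
  letI : MetricSpace ↥H := wMetric v hv1 hvinv
  have hdist_eq : ∀ x y : ↥H, dist x y = (wlen v (x⁻¹ * y) : ℝ) := fun x y => rfl
  obtain ⟨S, hMS, σ, hσ1, hσmul, hσiso, f, ⟨C, hC1, hQI⟩, hcoarse⟩ :=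
    hext ↥H (fun h x => h * x) (fun x => one_mul x) (fun h h' x => mul_assoc h h' x)
      (by
        intro h x y
        rw [hdist_eq, hdist_eq]
        have hxy : (h * x)⁻¹ * (h * y) = x⁻¹ * y := by group
        rw [hxy])
  obtain ⟨D, hD⟩ := hcoarse 1
  have hC0 : (0 : ℝ) < C := lt_of_lt_of_le one_pos hC1
  -- D is nonnegative
  have hD0 : 0 ≤ D := by
    have h1 := hD 1
    simp only [one_mul, OneMemClass.coe_one, hσ1] at h1
    rwa [dist_self] at h1
  -- a bound on the displacement of generators
  obtain ⟨M, hM0, hM⟩ : ∃ M : ℝ, 0 ≤ M ∧ ∀ t ∈ T ∪ T⁻¹, dist (σ t (f 1)) (f 1) ≤ M := by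
    have hfin2 : ((fun t => dist (σ t (f 1)) (f 1)) '' (T ∪ T⁻¹)).Finite :=
      (hTfin.union hTfin.inv).image _
    obtain ⟨M, hMub⟩ := hfin2.bddAbove
    exact ⟨max M 0, le_max_right _ _, fun t ht =>
      le_trans (hMub (Set.mem_image_of_mem _ ht)) (le_max_left _ _)⟩
  -- displacement bound for products of generators
  have horb : ∀ l : List G, (∀ x ∈ l, x ∈ T ∪ T⁻¹) →
      dist (σ l.prod (f 1)) (f 1) ≤ l.length * M := by
    intro l
    induction l with
    | nil =>
        intro _
        simp [hσ1]
    | cons a t ih =>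
        intro hmem
        have h1 : dist (σ (a * t.prod) (f 1)) (f 1) ≤
            dist (σ (a * t.prod) (f 1)) (σ a (f 1)) + dist (σ a (f 1)) (f 1) :=
          dist_triangle _ _ _
        have h2 : dist (σ (a * t.prod) (f 1)) (σ a (f 1)) = dist (σ t.prod (f 1)) (f 1) := by
          rw [hσmul]
          exact hσiso a _ _
        have h3 := ih fun x hx => hmem x (List.mem_cons_of_mem a hx)
        have h4 := hM a (hmem a List.mem_cons_self)
        simp only [List.prod_cons, List.length_cons]
        push_cast
        rw [add_mul, one_mul]
        rw [h2] at h1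
        linarith
  -- main estimate
  have hmain : ∀ x : ↥H, (wlen v x : ℝ) ≤ (D + glen ↑x * M + C) * C := by
    intro x
    have t1 : dist (f x) (σ ↑x (f 1)) ≤ D := by
      have := hD x
      simpa [mul_one] using this
    have t2 : dist (σ ↑x (f 1)) (f 1) ≤ glen ↑x * M := by
      have := horb (rep ↑x) (hrepmem ↑x)
      rwa [hrepprod] at this
    have hup : dist (f 1) (f x) ≤ D + glen ↑x * M := by
      calc dist (f 1) (f x)
          ≤ dist (f 1) (σ ↑x (f 1)) + dist (σ ↑x (f 1)) (f x) := dist_triangle _ _ _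
        _ = dist (σ ↑x (f 1)) (f 1) + dist (f x) (σ ↑x (f 1)) := by
            rw [dist_comm (f 1), dist_comm (σ _ _) (f x)]
        _ ≤ glen ↑x * M + D := add_le_add t2 t1
        _ = D + glen ↑x * M := by ring
    have hlow := (hQI 1 x).1
    have hd1x : dist (1 : ↥H) x = (wlen v x : ℝ) := by
      rw [hdist_eq, inv_one, one_mul]
    rw [hd1x] at hlow
    have h5 : (wlen v x : ℝ) / C ≤ D + glen ↑x * M + C := by
      have := hlow.trans hup
      rw [one_div, inv_mul_eq_div] at this
      linarith
    exact (div_le_iff₀ hC0).mp h5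
  -- choose a large enough n and derive a contradiction
  obtain ⟨n, hn⟩ := exists_nat_ge (D * C + C * C + M * C + 1)
  set g : ↥H := pick (chain e n) with hg
  have hws : ∀ s : ↥H, s ∉ chain e n → n + 1 ≤ w s := by
    intro s hs
    by_contra hlt
    push_neg at hlt
    exact hs (chain_mono e (Nat.lt_succ_iff.mp hlt) (wt_spec e he s))
  have hg1 : φ (n + 1) ≤ wlen v g :=
    le_wlen v (chain e n) (hhn n) fun s hs => hφmono (hws s hs)
  have hg2 : (n + 1) * (1 + glen ↑g) + 1 ≤ φ (n + 1) := by
    have hle : glen ↑g ≤ A (n + 1) := by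
      have := Finset.le_sup (f := fun j => glen ↑(pick (chain e j)))
        (Finset.self_mem_range_succ n)
      simpa [hA, hg] using this
    have := Nat.mul_le_mul_left (n + 1) (Nat.add_le_add_left hle 1)
    simp only [hφ]
    omega
  have hcast : (n + 1) * (1 + glen ↑g) + 1 ≤ wlen v g := le_trans hg2 hg1
  have hgn0 : (0 : ℝ) ≤ (glen ↑g : ℝ) := Nat.cast_nonneg _
  have hR : ((n : ℝ) + 1) * (1 + (glen ↑g : ℝ)) + 1 ≤ (D + (glen ↑g : ℝ) * M + C) * C := by
    calc ((n : ℝ) + 1) * (1 + (glen ↑g : ℝ)) + 1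
        = (((n + 1) * (1 + glen ↑g) + 1 : ℕ) : ℝ) := by push_cast; ring
      _ ≤ (wlen v g : ℝ) := by exact_mod_cast hcast
      _ ≤ _ := hmain g
  have hn' : D * C + C * C + M * C + 1 ≤ (n : ℝ) + 1 := by linarith
  nlinarith [mul_le_mul_of_nonneg_right hn' hgn0,
    mul_nonneg (mul_nonneg hD0 hC0.le) hgn0,
    mul_nonneg (mul_nonneg hC0.le hC0.le) hgn0, hD0, hM0, hC0.le, hgn0]
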